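/- The set of linear maps T : ℝⁿ → ℝᵐ that do not have maximal rank (i.e., rank(T) < min(m,n)) is porous in L(ℝⁿ, ℝᵐ). -/

import Mathlib

set_option maxHeartbeats 1000000

open Metric Filter Set Module Module.End ContinuousLinearMap

/-- γ(x,R,X): sup of radii r ≥ 0 of open balls contained in B_R(x) \ X (sup ∅ = 0). -/
noncomputable def porGamma {E : Type*} [SeminormedAddCommGroup E] (x : E) (R : ℝ) (X : Set E) : ℝ :=
  sSup {r : ℝ | 0 ≤ r ∧ ∃ x' : E, ball x' r ⊆ ball x R \ X}

/-- Porosity of X at x: liminf_{R→0⁺} γ(x,R,X)/R. -/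
noncomputable def porosityAt {E : Type*} [SeminormedAddCommGroup E] (x : E) (X : Set E) : ℝ :=
  liminf (fun R => porGamma x R X / R) (nhdsWithin 0 (Ioi 0))

/-- X is porous if its porosity is positive at each of its points. -/
def IsPorous {E : Type*} [SeminormedAddCommGroup E] (X : Set E) : Prop :=
  ∀ x ∈ X, 0 < porosityAt x X

/-- X is σ-porous if it is a countable union of porous sets. -/
def IsSigmaPorous {E : Type*} [SeminormedAddCommGroup E] (X : Set E) : Prop :=
  ∃ f : ℕ → Set E, (∀ k, IsPorous (f k)) ∧ X = ⋃ k, f k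

/-- Asymptotic cone of X. -/
def asympCone {E : Type*} [SeminormedAddCommGroup E] [NormedSpace ℝ E] (X : Set E) : Set E :=
  {v | ∃ (x : ℕ → E) (t : ℕ → ℝ), (∀ k, x k ∈ X) ∧ (∀ k, 0 < t k) ∧
    Tendsto (fun k => ‖x k‖) atTop atTop ∧ Tendsto (fun k => t k • x k) atTop (nhds v)}

lemma coreA {n m : ℕ} (hnm : n ≤ m)
    (T : EuclideanSpace ℝ (Fin n) →L[ℝ] EuclideanSpace ℝ (Fin m)) {ε : ℝ} (hε : 0 < ε) :
    ∃ S : EuclideanSpace ℝ (Fin n) →L[ℝ] EuclideanSpace ℝ (Fin m),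
      ‖S - T‖ ≤ 2 * ε * n ∧
      ∀ P : EuclideanSpace ℝ (Fin n) →L[ℝ] EuclideanSpace ℝ (Fin m),
        ‖P - S‖ < ε → Function.Injective P := by
  classical
  set A : EuclideanSpace ℝ (Fin n) →L[ℝ] EuclideanSpace ℝ (Fin n) :=
    (ContinuousLinearMap.adjoint T) ∘L T with hAdef
  have hA : (A : EuclideanSpace ℝ (Fin n) →ₗ[ℝ] EuclideanSpace ℝ (Fin n)).IsSymmetric := by
    intro x y
    simp only [hAdef, ContinuousLinearMap.coe_coe, ContinuousLinearMap.comp_apply]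
    rw [ContinuousLinearMap.adjoint_inner_left, ContinuousLinearMap.adjoint_inner_right]
  have hrank : Module.finrank ℝ (EuclideanSpace ℝ (Fin n)) = n := finrank_euclideanSpace_fin
  set b := hA.eigenvectorBasis hrank with hbdef
  have horth : ∀ i j : Fin n, i ≠ j → (inner ℝ (T (b i)) (T (b j)) : ℝ) = 0 := by
    intro i j hij
    have h1 : (inner ℝ ((ContinuousLinearMap.adjoint T) (T (b j))) (b i) : ℝ) = inner ℝ (T (b j)) (T (b i)) :=
      ContinuousLinearMap.adjoint_inner_left T (b i) (T (b j))
    have h2 : (A : EuclideanSpace ℝ (Fin n) →ₗ[ℝ] EuclideanSpace ℝ (Fin n)) (b j)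
        = (hA.eigenvalues hrank j : ℝ) • b j := hA.apply_eigenvectorBasis hrank j
    have h3 : (inner ℝ ((hA.eigenvalues hrank j : ℝ) • b j) (b i) : ℝ) = 0 := by
      rw [real_inner_smul_left, orthonormal_iff_ite.mp b.orthonormal]
      simp [hij.symm]
    rw [real_inner_comm]
    rw [← h1]
    have : (ContinuousLinearMap.adjoint T) (T (b j)) = (hA.eigenvalues hrank j : ℝ) • b j := h2
    rw [this, h3]
  -- the singular-value replacements
  set d : Fin n → ℝ := fun i => max ε ‖T (b i)‖ with hddef
  have hd_pos : ∀ i, ε ≤ d i := fun i => le_max_left _ _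
  -- the candidate partial isometry directions
  set s : Set (Fin m) := {j | ∃ h : (j : ℕ) < n, ε ≤ ‖T (b ⟨(j : ℕ), h⟩)‖} with hsdef
  set v : Fin m → EuclideanSpace ℝ (Fin m) := fun j =>
    if h : (j : ℕ) < n then ‖T (b ⟨(j : ℕ), h⟩)‖⁻¹ • T (b ⟨(j : ℕ), h⟩) else 0 with hvdef
  have hv : Orthonormal ℝ (s.restrict v) := by
    constructor
    · rintro ⟨j, hj, hTj⟩
      show ‖v j‖ = 1
      simp only [Set.restrict_apply, hvdef, dif_pos hj]
      rw [norm_smul, norm_inv, norm_norm, inv_mul_cancel₀]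
      exact ne_of_gt (lt_of_lt_of_le hε hTj)
    · rintro ⟨j, hj, hTj⟩ ⟨j', hj', hTj'⟩ hne
      have hjj' : j ≠ j' := fun h => hne (by simpa using h)
      show inner ℝ (v j) (v j') = 0
      simp only [Set.restrict_apply, hvdef, dif_pos hj, dif_pos hj']
      rw [real_inner_smul_left, real_inner_smul_right, horth ⟨(j:ℕ), hj⟩ ⟨(j':ℕ), hj'⟩
        (by simpa [Fin.ext_iff] using hjj')]
      ring
  obtain ⟨c, hc⟩ := hv.exists_orthonormalBasis_extension_of_card_eq
    (by simp [finrank_euclideanSpace_fin])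
  set e : Fin n → EuclideanSpace ℝ (Fin m) := fun i => c (Fin.castLE hnm i) with hedef
  have he : Orthonormal ℝ e := c.orthonormal.comp _ (Fin.castLE_injective hnm)
  have he_val : ∀ i : Fin n, ε ≤ ‖T (b i)‖ → e i = ‖T (b i)‖⁻¹ • T (b i) := by
    intro i hi
    have hmem : Fin.castLE hnm i ∈ s := ⟨by simpa using i.2, by simpa using hi⟩
    have := hc _ hmem
    rw [hedef]
    simp only [this, hvdef]
    have h2 : ((Fin.castLE hnm i : Fin m) : ℕ) < n := by simpa using i.2
    rw [dif_pos h2]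
    congr 1 <;> · congr 1; exact Fin.ext (by simp)
  -- key pointwise facts
  have hterm : ∀ i : Fin n, ‖d i • e i - T (b i)‖ ≤ 2 * ε := by
    intro i
    by_cases hi : ε ≤ ‖T (b i)‖
    · have : d i • e i = T (b i) := by
        rw [he_val i hi, hddef]
        simp only [max_eq_right hi, smul_smul]
        rw [mul_inv_cancel₀ (ne_of_gt (lt_of_lt_of_le hε hi)), one_smul]
      rw [this, sub_self, norm_zero]
      positivity
    · push_neg at hi
      have hdi : d i = ε := max_eq_left hi.le
      calc ‖d i • e i - T (b i)‖ ≤ ‖d i • e i‖ + ‖T (b i)‖ := norm_sub_le _ _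
        _ ≤ ε * 1 + ε := by
            rw [hdi, norm_smul, he.1 i, Real.norm_eq_abs, abs_of_pos hε]
            exact add_le_add le_rfl hi.le
        _ = 2 * ε := by ring
  -- define S
  set S : EuclideanSpace ℝ (Fin n) →L[ℝ] EuclideanSpace ℝ (Fin m) :=
    ∑ i, ContinuousLinearMap.smulRight (innerSL ℝ (b i)) (d i • e i) with hSdef
  have hSapp : ∀ x, S x = ∑ i, ((inner ℝ (b i) x : ℝ) * d i) • e i := by
    intro x
    rw [hSdef]
    rw [ContinuousLinearMap.sum_apply]
    refine Finset.sum_congr rfl fun i _ => ?_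
    rw [ContinuousLinearMap.smulRight_apply, innerSL_apply_apply, smul_smul]
  have hxnorm : ∀ x : EuclideanSpace ℝ (Fin n),
      ‖x‖ ^ 2 = ∑ i, (inner ℝ (b i) x : ℝ) ^ 2 := by
    intro x
    conv_lhs => rw [← b.sum_repr' x]
    rw [← real_inner_self_eq_norm_sq, b.orthonormal.inner_sum]
    simp [pow_two]
  have hSlow : ∀ x, ε * ‖x‖ ≤ ‖S x‖ := by
    intro x
    have h1 : ‖S x‖ ^ 2 = ∑ i, ((inner ℝ (b i) x : ℝ) * d i) ^ 2 := by
      rw [hSapp, ← real_inner_self_eq_norm_sq, he.inner_sum]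
      simp [pow_two]
    have h2 : (ε * ‖x‖) ^ 2 ≤ ‖S x‖ ^ 2 := by
      rw [h1, mul_pow, hxnorm x, Finset.mul_sum]
      refine Finset.sum_le_sum fun i _ => ?_
      rw [mul_pow]
      rw [mul_comm (ε ^ 2)]
      refine mul_le_mul_of_nonneg_left ?_ (sq_nonneg _)
      exact pow_le_pow_left₀ (le_of_lt hε) (hd_pos i) 2
    exact (pow_le_pow_iff_left₀ (by positivity) (norm_nonneg _) two_ne_zero).mp h2
  have hST : ‖S - T‖ ≤ 2 * ε * n := by
    refine ContinuousLinearMap.opNorm_le_bound _ (by positivity) fun x => ?_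
    have hx : (S - T) x = ∑ i, (inner ℝ (b i) x : ℝ) • (d i • e i - T (b i)) := by
      have hTx : T x = ∑ i, (inner ℝ (b i) x : ℝ) • T (b i) := by
        conv_lhs => rw [← b.sum_repr' x]
        rw [map_sum]
        refine Finset.sum_congr rfl fun i _ => ?_
        rw [map_smul]
      rw [ContinuousLinearMap.sub_apply, hSapp, hTx, ← Finset.sum_sub_distrib]
      refine Finset.sum_congr rfl fun i _ => ?_
      rw [smul_sub, smul_smul, mul_comm]
    rw [hx]
    calc ‖∑ i, (inner ℝ (b i) x : ℝ) • (d i • e i - T (b i))‖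
        ≤ ∑ i, ‖(inner ℝ (b i) x : ℝ) • (d i • e i - T (b i))‖ := norm_sum_le _ _
      _ ≤ ∑ _i : Fin n, ‖x‖ * (2 * ε) := by
          refine Finset.sum_le_sum fun i _ => ?_
          rw [norm_smul]
          refine mul_le_mul ?_ (hterm i) (norm_nonneg _) (norm_nonneg _)
          calc ‖(inner ℝ (b i) x : ℝ)‖ = |(inner ℝ (b i) x : ℝ)| := rfl
            _ ≤ ‖b i‖ * ‖x‖ := abs_real_inner_le_norm _ _
            _ = ‖x‖ := by rw [b.orthonormal.1 i, one_mul]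
      _ = 2 * ε * n * ‖x‖ := by
          rw [Finset.sum_const, Finset.card_univ, Fintype.card_fin, nsmul_eq_mul]
          ring
  refine ⟨S, hST, fun P hP => ?_⟩
  have hPx : ∀ x, (ε - ‖P - S‖) * ‖x‖ ≤ ‖P x‖ := by
    intro x
    have h1 : ‖S x - P x‖ ≤ ‖P - S‖ * ‖x‖ := by
      rw [← norm_neg, neg_sub, ← ContinuousLinearMap.sub_apply]
      exact ContinuousLinearMap.le_opNorm _ _
    have h2 : ‖S x‖ - ‖P x‖ ≤ ‖S x - P x‖ := norm_sub_norm_le _ _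
    have h3 := hSlow x
    nlinarith [norm_nonneg x]
  intro x y hxy
  have h0 : P (x - y) = 0 := by rw [map_sub, hxy, sub_self]
  have h1 := hPx (x - y)
  rw [h0, norm_zero] at h1
  have h2 : ‖x - y‖ ≤ 0 := by
    have hpos : 0 < ε - ‖P - S‖ := by linarith
    exact le_of_mul_le_mul_left (by rwa [mul_zero]) hpos
  have : x - y = 0 := by
    rw [← norm_le_zero_iff]
    exact h2
  exact sub_eq_zero.mp this

lemma coreB {n m : ℕ} (T : EuclideanSpace ℝ (Fin n) →L[ℝ] EuclideanSpace ℝ (Fin m))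
    {ε : ℝ} (hε : 0 < ε) :
    ∃ S : EuclideanSpace ℝ (Fin n) →L[ℝ] EuclideanSpace ℝ (Fin m),
      ‖S - T‖ ≤ 2 * ε * (n + m) ∧
      ∀ P : EuclideanSpace ℝ (Fin n) →L[ℝ] EuclideanSpace ℝ (Fin m), ‖P - S‖ < ε →
        min m n ≤ Module.finrank ℝ (LinearMap.range
          (P : EuclideanSpace ℝ (Fin n) →ₗ[ℝ] EuclideanSpace ℝ (Fin m))) := by
  rcases le_total n m with hnm | hmn
  · obtain ⟨S, hS1, hS2⟩ := coreA hnm T hε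
    refine ⟨S, le_trans hS1 ?_, fun P hP => ?_⟩
    · have : (0:ℝ) ≤ 2 * ε := by positivity
      have hn : (n:ℝ) ≤ (n:ℝ) + m := le_add_of_nonneg_right (Nat.cast_nonneg m)
      nlinarith
    · have hinj := hS2 P hP
      have : Module.finrank ℝ (LinearMap.range
          (P : EuclideanSpace ℝ (Fin n) →ₗ[ℝ] EuclideanSpace ℝ (Fin m))) = n := by
        rw [LinearMap.finrank_range_of_inj hinj, finrank_euclideanSpace_fin]
      rw [this]
      exact min_le_right _ _
  · obtain ⟨S', hS'1, hS'2⟩ := coreA hmn (ContinuousLinearMap.adjoint T) hε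
    refine ⟨ContinuousLinearMap.adjoint S', ?_, fun P hP => ?_⟩
    · have h1 : ContinuousLinearMap.adjoint S' - T
          = ContinuousLinearMap.adjoint (S' - ContinuousLinearMap.adjoint T) := by
        rw [map_sub, ContinuousLinearMap.adjoint_adjoint]
      rw [h1]
      have h2 : ‖ContinuousLinearMap.adjoint (S' - ContinuousLinearMap.adjoint T)‖
          = ‖S' - ContinuousLinearMap.adjoint T‖ := LinearIsometryEquiv.norm_map _ _
      rw [h2]
      refine le_trans hS'1 ?_
      have : (0:ℝ) ≤ 2 * ε := by positivity
      have hm : (m:ℝ) ≤ (n:ℝ) + m := le_add_of_nonneg_left (Nat.cast_nonneg n)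
      nlinarith
    · have hP' : ‖ContinuousLinearMap.adjoint P - S'‖ < ε := by
        have h1 : ContinuousLinearMap.adjoint P - S'
            = ContinuousLinearMap.adjoint (P - ContinuousLinearMap.adjoint S') := by
          rw [map_sub, ContinuousLinearMap.adjoint_adjoint]
        rw [h1]
        have h2 : ‖ContinuousLinearMap.adjoint (P - ContinuousLinearMap.adjoint S')‖
            = ‖P - ContinuousLinearMap.adjoint S'‖ := LinearIsometryEquiv.norm_map _ _
        rw [h2]; exact hP
      have hinj := hS'2 _ hP'
      have htop : LinearMap.range
          (P : EuclideanSpace ℝ (Fin n) →ₗ[ℝ] EuclideanSpace ℝ (Fin m)) = ⊤ := by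
        rw [← Submodule.orthogonal_eq_bot_iff, Submodule.eq_bot_iff]
        intro y hy
        have hz : ∀ x, (inner ℝ (ContinuousLinearMap.adjoint P y) x : ℝ) = 0 := by
          intro x
          rw [ContinuousLinearMap.adjoint_inner_left, real_inner_comm]
          exact (Submodule.mem_orthogonal _ y).mp hy (P x) (LinearMap.mem_range_self _ x)
        have h0 : ContinuousLinearMap.adjoint P y = 0 :=
          inner_self_eq_zero.mp (hz (ContinuousLinearMap.adjoint P y))
        exact hinj (by rw [h0, map_zero])
      rw [htop, finrank_top, finrank_euclideanSpace_fin]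
      exact min_le_left _ _

/-- The set of continuous linear maps T : ℝⁿ → ℝᵐ not of maximal rank is porous in L(ℝⁿ, ℝᵐ). -/
theorem nonMaximalRank_porous {n m : ℕ} :
    IsPorous {T : EuclideanSpace ℝ (Fin n) →L[ℝ] EuclideanSpace ℝ (Fin m) |
      Module.finrank ℝ (LinearMap.range (T : EuclideanSpace ℝ (Fin n) →ₗ[ℝ] EuclideanSpace ℝ (Fin m))) < min m n} := by
  intro T hT
  set X : Set (EuclideanSpace ℝ (Fin n) →L[ℝ] EuclideanSpace ℝ (Fin m)) :=
    {T : EuclideanSpace ℝ (Fin n) →L[ℝ] EuclideanSpace ℝ (Fin m) |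
      Module.finrank ℝ (LinearMap.range
        (T : EuclideanSpace ℝ (Fin n) →ₗ[ℝ] EuclideanSpace ℝ (Fin m))) < min m n} with hXdef
  set c : ℝ := 1 / (4 * ((n : ℝ) + m + 1)) with hcdef
  have hc : 0 < c := by rw [hcdef]; positivity
  have key : ∀ R : ℝ, 0 < R → c ≤ porGamma T R X / R ∧ porGamma T R X / R ≤ 1 := by
    intro R hR
    set ε : ℝ := R / (4 * ((n : ℝ) + m + 1)) with hεdef
    have hε : 0 < ε := by rw [hεdef]; positivity
    obtain ⟨S, hS1, hS2⟩ := coreB T hε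
    have hmem : ε ∈ {r : ℝ | 0 ≤ r ∧ ∃ x', ball x' r ⊆ ball T R \ X} := by
      refine ⟨hε.le, S, fun P hP => ?_⟩
      have hPS : ‖P - S‖ < ε := by rwa [mem_ball, dist_eq_norm] at hP
      constructor
      · rw [mem_ball, dist_eq_norm]
        have h1 : ‖P - T‖ ≤ ‖P - S‖ + ‖S - T‖ := by
          have := norm_add_le (P - S) (S - T)
          simpa using this
        have h2 : ε * (4 * ((n : ℝ) + m + 1)) = R := by
          rw [hεdef]; field_simp
        have hn0 : (0:ℝ) ≤ (n : ℝ) + m := by positivity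
        nlinarith
      · intro hPX
        have := hS2 P hPS
        rw [hXdef] at hPX
        simp only [Set.mem_setOf_eq] at hPX
        omega
    have hbdd : BddAbove {r : ℝ | 0 ≤ r ∧ ∃ x', ball x' r ⊆ ball T R \ X} := by
      refine ⟨R, ?_⟩
      rintro r ⟨hr0, x', hsub⟩
      rcases hr0.eq_or_lt with h | h
      · exact h ▸ hR.le
      · have hx' : x' ∈ ball T R := (hsub (mem_ball_self h)).1
        have hT' : T ∉ ball x' r := fun hh => (hsub hh).2 hT
        have h1 : r ≤ dist T x' := le_of_not_gt (fun hh => hT' (by rwa [mem_ball]))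
        have h2 : dist T x' < R := by rw [dist_comm]; rwa [mem_ball] at hx'
        linarith
    have hγ : ε ≤ porGamma T R X := le_csSup hbdd hmem
    have hup : porGamma T R X ≤ R := by
      refine Real.sSup_le ?_ hR.le
      rintro r ⟨hr0, x', hsub⟩
      rcases hr0.eq_or_lt with h | h
      · exact h ▸ hR.le
      · have hx' : x' ∈ ball T R := (hsub (mem_ball_self h)).1
        have hT' : T ∉ ball x' r := fun hh => (hsub hh).2 hT
        have h1 : r ≤ dist T x' := le_of_not_gt (fun hh => hT' (by rwa [mem_ball]))
        have h2 : dist T x' < R := by rw [dist_comm]; rwa [mem_ball] at hx'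
        linarith
    constructor
    · rw [le_div_iff₀ hR]
      calc c * R = ε := by rw [hεdef, hcdef]; ring
        _ ≤ porGamma T R X := hγ
    · rw [div_le_one hR]
      exact hup
  have hev : ∀ᶠ R in nhdsWithin 0 (Ioi 0), c ≤ porGamma T R X / R :=
    eventually_nhdsWithin_of_forall (fun R hR => (key R hR).1)
  have hev2 : ∀ᶠ R in nhdsWithin 0 (Ioi 0), porGamma T R X / R ≤ 1 :=
    eventually_nhdsWithin_of_forall (fun R hR => (key R hR).2)
  have hlim : c ≤ porosityAt T X :=
    le_liminf_of_le (isCoboundedUnder_ge_of_eventually_le _ hev2) hev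
  exact lt_of_lt_of_le hc hlim
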